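/- The FSIC-PA overall outage probability equals P̂out = 1 − e^{−α1} + (1 − e^{−αs})^M·e^{−α1}. -/

import Mathlib

open MeasureTheory ProbabilityTheory Real
open scoped ENNReal

/-- The interference threshold `τ(g) = max{0, g/α₀ − 1}`. -/
noncomputable def tau (α0 g : ℝ) : ℝ := max 0 (g / α0 - 1)

/-- The FSIC-PA achievable rate of a secondary user with channel gain `h`,
given the primary channel gain `g`. -/
noncomputable def rateFSIC (Ps α0 h g : ℝ) : ℝ :=
  if Ps * h ≤ tau α0 g then Real.logb 2 (1 + Ps * h)
  else Real.logb 2 (1 + tau α0 g)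

section AuxExp

lemma expM_Iic (x : ℝ) (hx : 0 ≤ x) :
    expMeasure 1 (Set.Iic x) = ENNReal.ofReal (1 - Real.exp (-x)) := by
  rw [expMeasure, gammaMeasure, withDensity_apply _ measurableSet_Iic]
  have h : ∀ y, gammaPDF 1 1 y = exponentialPDF 1 y := fun y => rfl
  simp only [h]
  rw [lintegral_exponentialPDF_eq_antiDeriv zero_lt_one x, if_pos hx, one_mul]

lemma expM_singleton (x : ℝ) : expMeasure 1 {x} = 0 := by
  rw [expMeasure, gammaMeasure]
  exact (withDensity_absolutelyContinuous _ _) (measure_singleton x)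

lemma expM_Iio (x : ℝ) (hx : 0 ≤ x) :
    expMeasure 1 (Set.Iio x) = ENNReal.ofReal (1 - Real.exp (-x)) := by
  have h1 : expMeasure 1 (Set.Iic x) = expMeasure 1 (Set.Iio x) := by
    refine le_antisymm ?_ (measure_mono Set.Iio_subset_Iic_self)
    rw [← Set.Iio_union_right]
    exact (measure_union_le _ _).trans (by rw [expM_singleton, add_zero])
  rw [← h1, expM_Iic x hx]

lemma exp_neg_le_one' {x : ℝ} (hx : 0 ≤ x) : Real.exp (-x) ≤ 1 :=
  Real.exp_le_one_iff.mpr (by linarith)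

lemma expM_Ici (x : ℝ) (hx : 0 ≤ x) :
    expMeasure 1 (Set.Ici x) = ENNReal.ofReal (Real.exp (-x)) := by
  have : IsProbabilityMeasure (expMeasure 1) := isProbabilityMeasure_expMeasure zero_lt_one
  have h := prob_compl_eq_one_sub (μ := expMeasure 1) (measurableSet_Iio (a := x))
  rw [Set.compl_Iio] at h
  have key : (1 : ℝ≥0∞) = ENNReal.ofReal (1 - Real.exp (-x)) + ENNReal.ofReal (Real.exp (-x)) := by
    rw [← ENNReal.ofReal_add (by linarith [exp_neg_le_one' hx]) (Real.exp_pos _).le]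
    norm_num
  rw [h, expM_Iio x hx, key, ENNReal.add_sub_cancel_left ENNReal.ofReal_ne_top]

/-- pointwise outage characterization -/
lemma rate_lt_iff (Ps α0 εs Rs h g : ℝ) (hPs : 0 < Ps) (hα0 : 0 < α0) (hεs : 0 < εs)
    (hRs : Rs = Real.logb 2 (1 + εs)) (hh : 0 ≤ h) :
    rateFSIC Ps α0 h g < Rs ↔ g < (1 + εs) * α0 ∨ h < εs / Ps := by
  have hτ : 0 ≤ tau α0 g := le_max_left _ _
  have hg1 : g < (1 + εs) * α0 ↔ tau α0 g < εs := by
    rw [tau, max_lt_iff]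
    constructor
    · intro hgl
      refine ⟨hεs, ?_⟩
      rw [sub_lt_iff_lt_add, div_lt_iff₀ hα0]
      nlinarith
    · rintro ⟨-, h2⟩
      rw [sub_lt_iff_lt_add, div_lt_iff₀ hα0] at h2
      nlinarith
  have hh1 : h < εs / Ps ↔ Ps * h < εs := by
    rw [lt_div_iff₀ hPs, mul_comm]
  rw [hg1, hh1, rateFSIC, hRs]
  split_ifs with hle
  · rw [Real.logb_lt_logb_iff one_lt_two (by nlinarith) (by linarith)]
    constructor
    · intro h'; right; linarith
    · rintro (h' | h') <;> linarith
  · push_neg at hle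
    rw [Real.logb_lt_logb_iff one_lt_two (by linarith) (by linarith)]
    constructor
    · intro h'; left; linarith
    · rintro (h' | h') <;> linarith

end AuxExp

/-- Theorem 2: closed form for the FSIC-PA overall outage probability. -/
theorem fsic_pa_outage_closed_form
    {Ω : Type*} [MeasurableSpace Ω] (μ : Measure Ω) [IsProbabilityMeasure μ]
    (M : ℕ) (hM : 1 ≤ M)
    (P0 Ps R0 Rs : ℝ) (hP0 : 0 < P0) (hPs : 0 < Ps) (hR0 : 0 < R0) (hRs : 0 < Rs)
    (ε0 εs α0 αs α1 : ℝ)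
    (hε0 : ε0 = 2 ^ R0 - 1) (hεs : εs = 2 ^ Rs - 1)
    (hα0 : α0 = ε0 / P0) (hαs : αs = εs / Ps) (hα1 : α1 = (1 + εs) * α0)
    (G : Ω → ℝ) (H : Fin M → Ω → ℝ)
    (hGmeas : Measurable G) (hHmeas : ∀ m, Measurable (H m))
    (hGnn : ∀ ω, 0 ≤ G ω) (hHnn : ∀ m ω, 0 ≤ H m ω)
    (hGdist : Measure.map G μ = expMeasure 1)
    (hHdist : ∀ m, Measure.map (H m) μ = expMeasure 1)
    (hIndep : iIndepFun
      (Fin.cons G H : Fin (M + 1) → Ω → ℝ) μ)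
    (Z : Ω → ℝ) (hZ : ∀ ω, Z ω = ⨆ m : Fin M, H m ω)
    :
    (μ {ω | (⨆ m : Fin M, rateFSIC Ps α0 (H m ω) (G ω)) < Rs}).toReal =
      1 - Real.exp (-α1) + (1 - Real.exp (-αs)) ^ M * Real.exp (-α1) := by
  have hMne : Nonempty (Fin M) := ⟨⟨0, hM⟩⟩
  -- positivity facts
  have h2R0 : (1 : ℝ) < 2 ^ R0 := by
    calc (1 : ℝ) = 2 ^ (0 : ℝ) := by norm_num
    _ < 2 ^ R0 := (Real.rpow_lt_rpow_left_iff one_lt_two).mpr hR0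
  have h2Rs : (1 : ℝ) < 2 ^ Rs := by
    calc (1 : ℝ) = 2 ^ (0 : ℝ) := by norm_num
    _ < 2 ^ Rs := (Real.rpow_lt_rpow_left_iff one_lt_two).mpr hRs
  have hε0pos : 0 < ε0 := by rw [hε0]; linarith
  have hεspos : 0 < εs := by rw [hεs]; linarith
  have hα0pos : 0 < α0 := by rw [hα0]; positivity
  have hαspos : 0 < αs := by rw [hαs]; positivity
  have hα1pos : 0 < α1 := by rw [hα1]; positivity
  have hRseq : Rs = Real.logb 2 (1 + εs) := by
    rw [hεs]
    have h1 : (1 : ℝ) + (2 ^ Rs - 1) = 2 ^ Rs := by ring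
    rw [h1, Real.logb_rpow two_pos (by norm_num)]
  -- set equality
  have hset : {ω | (⨆ m : Fin M, rateFSIC Ps α0 (H m ω) (G ω)) < Rs}
      = (G ⁻¹' Set.Iio α1) ∪ ⋂ m, H m ⁻¹' Set.Iio αs := by
    ext ω
    simp only [Set.mem_setOf_eq, Set.mem_union, Set.mem_iInter, Set.mem_preimage,
      Set.mem_Iio]
    have hsup : (⨆ m : Fin M, rateFSIC Ps α0 (H m ω) (G ω)) < Rs
        ↔ ∀ m, rateFSIC Ps α0 (H m ω) (G ω) < Rs := by
      constructor
      · intro h m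
        exact lt_of_le_of_lt (le_ciSup (f := fun m => rateFSIC Ps α0 (H m ω) (G ω))
          (Set.Finite.bddAbove (Set.finite_range _)) m) h
      · intro h
        obtain ⟨m0, hm0⟩ := Finite.exists_max (fun m => rateFSIC Ps α0 (H m ω) (G ω))
        exact lt_of_le_of_lt (ciSup_le hm0) (h m0)
    rw [hsup]
    have hpt : ∀ m, rateFSIC Ps α0 (H m ω) (G ω) < Rs ↔ G ω < α1 ∨ H m ω < αs := by
      intro m
      rw [hα1, hαs]
      exact rate_lt_iff Ps α0 εs Rs (H m ω) (G ω) hPs hα0pos hεspos hRseq (hHnn m ω)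
    simp only [hpt]
    constructor
    · intro h
      by_cases hG : G ω < α1
      · exact Or.inl hG
      · exact Or.inr fun m => (h m).resolve_left hG
    · rintro (h | h) m
      · exact Or.inl h
      · exact Or.inr (h m)
  -- abbreviations
  set A : Set Ω := G ⁻¹' Set.Iio α1 with hA
  set B : Set Ω := ⋂ m, H m ⁻¹' Set.Iio αs with hB
  have hAmeas : MeasurableSet A := hGmeas measurableSet_Iio
  have hBmeas : MeasurableSet B := MeasurableSet.iInter fun m => hHmeas m measurableSet_Iio
  -- split into disjoint pieces
  have hsplit : A ∪ B = A ∪ (Aᶜ ∩ B) := by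
    rw [Set.union_inter_distrib_left, Set.union_compl_self, Set.univ_inter]
  have hdisj : Disjoint A (Aᶜ ∩ B) :=
    Set.disjoint_left.mpr fun ω hω ⟨hω', _⟩ => hω' hω
  have hμA : μ A = ENNReal.ofReal (1 - Real.exp (-α1)) := by
    rw [hA, ← Measure.map_apply hGmeas measurableSet_Iio, hGdist, expM_Iio α1 hα1pos.le]
  -- independence computation
  have hkey : μ (Aᶜ ∩ B) = ENNReal.ofReal (Real.exp (-α1))
      * ENNReal.ofReal (1 - Real.exp (-αs)) ^ M := by
    have hsets : ∀ i, MeasurableSet ((Fin.cons (Set.Ici α1) (fun _ => Set.Iio αs) :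
        Fin (M+1) → Set ℝ) i) := by
      intro i
      refine Fin.cases ?_ ?_ i
      · exact measurableSet_Ici
      · intro m; exact measurableSet_Iio
    have h := hIndep.measure_inter_preimage_eq_mul Finset.univ
      (sets := Fin.cons (Set.Ici α1) (fun _ => Set.Iio αs)) (fun i _ => hsets i)
    have hL : (⋂ i ∈ Finset.univ, (Fin.cons G H : Fin (M+1) → Ω → ℝ) i ⁻¹'
        (Fin.cons (Set.Ici α1) (fun _ => Set.Iio αs) : Fin (M+1) → Set ℝ) i) = Aᶜ ∩ B := by
      ext ω
      simp only [Set.mem_iInter, Finset.mem_univ, forall_true_left, Set.mem_inter_iff,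
        Set.mem_compl_iff, hA, hB, Set.mem_preimage, Set.mem_Iio, Set.mem_iInter, Set.mem_Ici,
        not_lt]
      rw [Fin.forall_fin_succ]
      simp [Fin.cons_zero, Fin.cons_succ]
    rw [hL] at h
    rw [h, Fin.prod_univ_succ]
    simp only [Fin.cons_zero, Fin.cons_succ]
    have h0 : μ (G ⁻¹' Set.Ici α1) = ENNReal.ofReal (Real.exp (-α1)) := by
      rw [← Measure.map_apply hGmeas measurableSet_Ici, hGdist, expM_Ici α1 hα1pos.le]
    have hm : ∀ m : Fin M, μ (H m ⁻¹' Set.Iio αs) = ENNReal.ofReal (1 - Real.exp (-αs)) := by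
      intro m
      rw [← Measure.map_apply (hHmeas m) measurableSet_Iio, hHdist m, expM_Iio αs hαspos.le]
    rw [h0]
    congr 1
    rw [Finset.prod_congr rfl (fun m _ => hm m), Finset.prod_const, Finset.card_univ,
      Fintype.card_fin]
  -- put everything together
  rw [hset, hsplit, measure_union hdisj (hAmeas.compl.inter hBmeas), hμA, hkey]
  have he1 : Real.exp (-α1) ≤ 1 := exp_neg_le_one' hα1pos.le
  have hes : Real.exp (-αs) ≤ 1 := exp_neg_le_one' hαspos.le
  rw [← ENNReal.ofReal_pow (by linarith), ← ENNReal.ofReal_mul (Real.exp_pos _).le,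
    ← ENNReal.ofReal_add (by linarith)
      (mul_nonneg (Real.exp_pos _).le (pow_nonneg (by linarith) M))]
  rw [ENNReal.toReal_ofReal (add_nonneg (by linarith)
    (mul_nonneg (Real.exp_pos _).le (pow_nonneg (by linarith) M)))]
  ring
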